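/- Let D ⊂ ℝ² be the 'dumbbell' set consisting of two closed disks of area π/2 each (radius 1/√2), whose centers are at distance 2 + 2·(1/√2) = 2 + √2 apart, connected by the straight segment between the nearest points of the two disks (of length 2). Using the Minkowski perimeter (which counts the segment's length twice), the ratio δ(D)/λ₀(D)² equals (√2 − 1)/4 + 1/(2π), where δ(D) = (P(D) − 2π·r)/(2π·r) with r = 1 the radius of the disk of the same area π, and λ₀(D) = |D Δ B_x|/|D| with B_x the disk of area π centered at the barycenter x of D. -/

import Mathlib

open MeasureTheory Metric

/-- A point of the Euclidean plane. -/
noncomputable def pt (a b : ℝ) : EuclideanSpace ℝ (Fin 2) := WithLp.toLp 2 ![a, b]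

/-- The dumbbell: two closed disks of area `π/2` (radius `1/√2`) whose centers are
`2 + √2` apart, joined by the segment of length `2` between their nearest points. -/
noncomputable def dumbbell : Set (EuclideanSpace ℝ (Fin 2)) :=
  closedBall (pt (-(1 + Real.sqrt 2 / 2)) 0) (1 / Real.sqrt 2) ∪
  closedBall (pt (1 + Real.sqrt 2 / 2) 0) (1 / Real.sqrt 2) ∪
  segment ℝ (pt (-1) 0) (pt 1 0)

/-- The barycenter of the dumbbell. -/
noncomputable def dumbbellBary : EuclideanSpace ℝ (Fin 2) :=
  ((volume dumbbell).toReal)⁻¹ • ∫ x in dumbbell, x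

/-! ### Basic coordinate lemmas -/

lemma pt0 (a b : ℝ) : pt a b 0 = a := rfl
lemma pt1 (a b : ℝ) : pt a b 1 = b := rfl

lemma s2sq : Real.sqrt 2 ^ 2 = 2 := Real.sq_sqrt (by norm_num)
lemma s2pos : (0:ℝ) < Real.sqrt 2 := Real.sqrt_pos.mpr (by norm_num)
lemma s2lt : Real.sqrt 2 < 2 := by nlinarith [s2sq, s2pos]
lemma rad_eq : 1 / Real.sqrt 2 = Real.sqrt 2 / 2 := by
  rw [div_eq_div_iff s2pos.ne' (by norm_num : (2:ℝ) ≠ 0)]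
  nlinarith [s2sq]

lemma vol_cb (x : EuclideanSpace ℝ (Fin 2)) (R : ℝ) (hR : 0 ≤ R) :
    volume (closedBall x R) = ENNReal.ofReal (Real.pi * R ^ 2) := by
  rw [EuclideanSpace.volume_closedBall]
  simp only [Fintype.card_fin]
  rw [show ((2:ℕ):ℝ)/2 + 1 = 2 by norm_num, Real.Gamma_two]
  rw [← ENNReal.ofReal_pow hR, ← ENNReal.ofReal_mul (by positivity)]
  rw [Real.sq_sqrt Real.pi_pos.le]
  ring_nf

lemma dist_eq2 (x y : EuclideanSpace ℝ (Fin 2)) :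
    dist x y = Real.sqrt ((x 0 - y 0)^2 + (x 1 - y 1)^2) := by
  rw [EuclideanSpace.dist_eq, Fin.sum_univ_two]
  simp [Real.dist_eq, sq_abs]

lemma dist_pt (a b c d : ℝ) : dist (pt a b) (pt c d) = Real.sqrt ((a-c)^2 + (b-d)^2) := by
  rw [dist_eq2, pt0, pt1, pt0, pt1]

lemma coord_le_dist (x y : EuclideanSpace ℝ (Fin 2)) (i : Fin 2) :
    |x i - y i| ≤ dist x y := by
  rw [dist_eq2, ← Real.sqrt_sq_eq_abs]
  apply Real.sqrt_le_sqrt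
  fin_cases i
  · show (x 0 - y 0)^2 ≤ _; nlinarith [sq_nonneg (x 1 - y 1)]
  · show (x 1 - y 1)^2 ≤ _; nlinarith [sq_nonneg (x 0 - y 0)]

lemma vol_box (s t : Set ℝ) (hs : MeasurableSet s) (ht : MeasurableSet t) :
    volume {x : EuclideanSpace ℝ (Fin 2) | x 0 ∈ s ∧ x 1 ∈ t} = volume s * volume t := by
  have e := EuclideanSpace.volume_preserving_symm_measurableEquiv_toLp (Fin 2)
  have hst : MeasurableSet (Set.univ.pi ![s, t]) := by
    apply MeasurableSet.univ_pi
    intro i; fin_cases i <;> simpa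
  have : {x : EuclideanSpace ℝ (Fin 2) | x 0 ∈ s ∧ x 1 ∈ t}
      = (MeasurableEquiv.toLp 2 (Fin 2 → ℝ)).symm ⁻¹' (Set.univ.pi ![s, t]) := by
    ext x
    simp only [Set.mem_setOf_eq, Set.mem_preimage, Set.mem_pi, Set.mem_univ, forall_true_left]
    constructor
    · rintro ⟨h0, h1⟩ i; fin_cases i <;> simpa
    · intro h; exact ⟨by simpa using h 0, by simpa using h 1⟩
  rw [this, e.measure_preimage hst.nullMeasurableSet, volume_pi_pi, Fin.prod_univ_two]
  simp

/-! ### The segment -/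

lemma seg_coords {x : EuclideanSpace ℝ (Fin 2)} (hx : x ∈ segment ℝ (pt (-1) 0) (pt 1 0)) :
    |x 0| ≤ 1 ∧ x 1 = 0 := by
  obtain ⟨a, b, ha, hb, hab, rfl⟩ := hx
  have h0 : (a • pt (-1) 0 + b • pt 1 0) 0 = a * (-1) + b * 1 := rfl
  have h1 : (a • pt (-1) 0 + b • pt 1 0) 1 = a * 0 + b * 0 := rfl
  constructor
  · rw [h0, abs_le]; constructor <;> nlinarith
  · rw [h1]; ring

lemma mem_seg (c : ℝ) (hc : |c| ≤ 1) : pt c 0 ∈ segment ℝ (pt (-1) 0) (pt 1 0) := by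
  refine ⟨(1 - c)/2, (1 + c)/2, by rw [abs_le] at hc; linarith [hc.2],
    by rw [abs_le] at hc; linarith [hc.1], by ring, ?_⟩
  ext i
  fin_cases i
  · show (1-c)/2 * (-1) + (1+c)/2 * 1 = c; ring
  · show (1-c)/2 * 0 + (1+c)/2 * 0 = 0; ring

lemma isCompact_seg : IsCompact (segment ℝ (pt (-1) 0) (pt 1 0)) := by
  rw [segment_eq_image]
  exact (isCompact_Icc).image (by continuity)

lemma vol_seg : volume (segment ℝ (pt (-1) 0) (pt 1 0)) = 0 := by
  have h : segment ℝ (pt (-1) 0) (pt 1 0) ⊆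
      {x : EuclideanSpace ℝ (Fin 2) | x 0 ∈ (Set.univ : Set ℝ) ∧ x 1 ∈ ({0} : Set ℝ)} := by
    intro x hx
    exact ⟨trivial, (seg_coords hx).2⟩
  refine measure_mono_null h ?_
  rw [vol_box _ _ MeasurableSet.univ (measurableSet_singleton 0)]
  simp

/-! ### Volume of the dumbbell -/

lemma dist_centers :
    dist (pt (-(1 + Real.sqrt 2 / 2)) 0) (pt (1 + Real.sqrt 2 / 2) 0) = 2 + Real.sqrt 2 := by
  rw [dist_pt]
  rw [show (-(1 + Real.sqrt 2 / 2) - (1 + Real.sqrt 2 / 2)) = -(2 + Real.sqrt 2) by ring]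
  rw [show ((0:ℝ) - 0) = 0 by ring]
  rw [show (-(2 + Real.sqrt 2))^2 + (0:ℝ)^2 = (2 + Real.sqrt 2)^2 by ring]
  exact Real.sqrt_sq (by positivity)

lemma balls_disjoint :
    Disjoint (closedBall (pt (-(1 + Real.sqrt 2 / 2)) 0) (1 / Real.sqrt 2))
      (closedBall (pt (1 + Real.sqrt 2 / 2) 0) (1 / Real.sqrt 2)) := by
  apply closedBall_disjoint_closedBall
  rw [dist_centers, rad_eq]
  nlinarith [s2pos]

lemma vol_dumbbell : volume dumbbell = ENNReal.ofReal Real.pi := by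
  have hseg : volume (segment ℝ (pt (-1) 0) (pt 1 0)) = 0 := vol_seg
  have h1 : volume dumbbell = volume
      (closedBall (pt (-(1 + Real.sqrt 2 / 2)) 0) (1 / Real.sqrt 2) ∪
       closedBall (pt (1 + Real.sqrt 2 / 2) 0) (1 / Real.sqrt 2)) := by
    refine le_antisymm ?_ (measure_mono Set.subset_union_left)
    calc volume dumbbell ≤ _ + _ := measure_union_le _ _
    _ = _ := by rw [hseg, add_zero]
  rw [h1, measure_union balls_disjoint measurableSet_closedBall,
    vol_cb _ _ (by positivity), vol_cb _ _ (by positivity),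
    ← ENNReal.ofReal_add (by positivity) (by positivity)]
  congr 1
  rw [rad_eq]
  nlinarith [s2sq, Real.pi_pos]

/-! ### The barycenter is the origin -/

lemma neg_pt (a b : ℝ) : -pt a b = pt (-a) (-b) := by
  ext i; fin_cases i <;> rfl

lemma isClosed_dumbbell : IsClosed dumbbell := by
  apply IsClosed.union
  · exact (isClosed_closedBall.union isClosed_closedBall)
  · rw [segment_eq_image]
    exact ((isCompact_Icc).image (by continuity)).isClosed

lemma dumbbell_symm : ∀ x, x ∈ dumbbell → -x ∈ dumbbell := by
  intro x hx
  rcases hx with (h | h) | h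
  · left; right
    rw [mem_closedBall] at h ⊢
    rw [show pt (1 + Real.sqrt 2 / 2) 0 = -pt (-(1 + Real.sqrt 2 / 2)) 0 by
      rw [neg_pt]; norm_num]
    rwa [dist_neg_neg]
  · left; left
    rw [mem_closedBall] at h ⊢
    rw [show pt (-(1 + Real.sqrt 2 / 2)) 0 = -pt (1 + Real.sqrt 2 / 2) 0 by
      rw [neg_pt]; norm_num]
    rwa [dist_neg_neg]
  · right
    obtain ⟨a, b, ha, hb, hab, rfl⟩ := h
    refine ⟨b, a, hb, ha, by linarith, ?_⟩
    rw [show pt (-1) 0 = -pt 1 0 by rw [neg_pt]; norm_num] at *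
    module

lemma integral_dumbbell_zero : (∫ x in dumbbell, x : EuclideanSpace ℝ (Fin 2)) = 0 := by
  set f : EuclideanSpace ℝ (Fin 2) → EuclideanSpace ℝ (Fin 2) :=
    dumbbell.indicator id with hf
  have hsymm : ∀ x, f (-x) = -f x := by
    intro x
    by_cases hx : x ∈ dumbbell
    · rw [hf]
      rw [Set.indicator_of_mem hx, Set.indicator_of_mem (dumbbell_symm x hx)]
      simp
    · have hnx : -x ∉ dumbbell := by
        intro h
        exact hx (by simpa using dumbbell_symm _ h)
      rw [hf, Set.indicator_of_notMem hx, Set.indicator_of_notMem hnx]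
      simp
  have h1 : (∫ x, f x) = ∫ x, f (-x) := (integral_neg_eq_self f volume).symm
  have h2 : (∫ x, f x) = -∫ x, f x := by
    calc (∫ x, f x) = ∫ x, f (-x) := h1
    _ = ∫ x, -f x := by simp_rw [hsymm]
    _ = -∫ x, f x := integral_neg f
  have h4 : (2:ℝ) • (∫ x, f x) = 0 := by
    rw [two_smul]
    nth_rewrite 1 [h2]
    exact neg_add_cancel _
  have h3 : (∫ x, f x) = 0 := (smul_eq_zero.mp h4).resolve_left (by norm_num)
  rw [← integral_indicator isClosed_dumbbell.measurableSet]
  exact h3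

lemma bary_eq : dumbbellBary = 0 := by
  rw [dumbbellBary, integral_dumbbell_zero, smul_zero]

/-! ### The symmetric difference -/

lemma zero_pt : (0 : EuclideanSpace ℝ (Fin 2)) = pt 0 0 := by
  ext i; fin_cases i <;> rfl

lemma dist_c_zero (s : ℝ) : dist (pt s 0) (0 : EuclideanSpace ℝ (Fin 2)) = |s| := by
  rw [zero_pt, dist_pt]
  rw [show (s - 0)^2 + ((0:ℝ)-0)^2 = s^2 by ring]
  exact Real.sqrt_sq_eq_abs s

lemma inter_null : volume (dumbbell ∩ closedBall (0 : EuclideanSpace ℝ (Fin 2)) 1) = 0 := by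
  have hsub : dumbbell ∩ closedBall (0 : EuclideanSpace ℝ (Fin 2)) 1 ⊆
      sphere (0 : EuclideanSpace ℝ (Fin 2)) 1 ∪ segment ℝ (pt (-1) 0) (pt 1 0) := by
    rintro x ⟨(h | h) | h, hB⟩
    · left
      rw [mem_closedBall] at h hB
      rw [mem_sphere]
      have hd : dist (pt (-(1 + Real.sqrt 2 / 2)) 0) (0 : EuclideanSpace ℝ (Fin 2))
          = 1 + Real.sqrt 2 / 2 := by
        rw [dist_c_zero, abs_neg, abs_of_pos (by positivity)]
      have htri := dist_triangle (pt (-(1 + Real.sqrt 2 / 2)) 0) x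
        (0 : EuclideanSpace ℝ (Fin 2))
      rw [dist_comm _ x] at htri
      rw [rad_eq] at h
      apply le_antisymm hB
      nlinarith [htri, hd]
    · left
      rw [mem_closedBall] at h hB
      rw [mem_sphere]
      have hd : dist (pt (1 + Real.sqrt 2 / 2) 0) (0 : EuclideanSpace ℝ (Fin 2))
          = 1 + Real.sqrt 2 / 2 := by
        rw [dist_c_zero, abs_of_pos (by positivity)]
      have htri := dist_triangle (pt (1 + Real.sqrt 2 / 2) 0) x
        (0 : EuclideanSpace ℝ (Fin 2))
      rw [dist_comm _ x] at htri
      rw [rad_eq] at h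
      apply le_antisymm hB
      nlinarith [htri, hd]
    · right; exact h
  refine measure_mono_null hsub (measure_union_null ?_ vol_seg)
  exact Measure.addHaar_sphere volume _ _

lemma vol_symmdiff :
    volume ((dumbbell \ closedBall (0 : EuclideanSpace ℝ (Fin 2)) 1) ∪
      (closedBall (0 : EuclideanSpace ℝ (Fin 2)) 1 \ dumbbell))
      = ENNReal.ofReal (2 * Real.pi) := by
  rw [measure_union disjoint_sdiff_sdiff
    (measurableSet_closedBall.diff isClosed_dumbbell.measurableSet)]
  rw [measure_diff_null' inter_null,
    measure_diff_null' (by rw [Set.inter_comm]; exact inter_null),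
    vol_dumbbell, vol_cb _ _ zero_le_one,
    ← ENNReal.ofReal_add Real.pi_pos.le (by positivity)]
  norm_num
  ring_nf
  rw [ENNReal.ofReal_mul Real.pi_pos.le]
  simp

/-! ### The Minkowski content -/

noncomputable def boxSet (a b : ℝ) : Set (EuclideanSpace ℝ (Fin 2)) :=
  {x | x 0 ∈ Set.Icc (-a) a ∧ x 1 ∈ Set.Icc (-b) b}

lemma vol_boxSet (a b : ℝ) (ha : 0 ≤ a) (hb : 0 ≤ b) :
    volume (boxSet a b) = ENNReal.ofReal (4 * a * b) := by
  rw [boxSet, vol_box _ _ measurableSet_Icc measurableSet_Icc,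
    Real.volume_Icc, Real.volume_Icc,
    ← ENNReal.ofReal_mul (by linarith)]
  congr 1; ring

lemma measurable_boxSet (a b : ℝ) : MeasurableSet (boxSet a b) := by
  have h0 : Measurable (fun x : EuclideanSpace ℝ (Fin 2) => x 0) :=
    (measurable_pi_apply 0).comp (MeasurableEquiv.toLp 2 (Fin 2 → ℝ)).symm.measurable
  have h1 : Measurable (fun x : EuclideanSpace ℝ (Fin 2) => x 1) :=
    (measurable_pi_apply 1).comp (MeasurableEquiv.toLp 2 (Fin 2 → ℝ)).symm.measurable
  exact (h0 measurableSet_Icc).inter (h1 measurableSet_Icc)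

lemma cthick_seg_subset {ε : ℝ} (hε : 0 < ε) :
    cthickening ε (segment ℝ (pt (-1) 0) (pt 1 0)) ⊆ boxSet (1+ε) ε := by
  intro x hx
  obtain ⟨y, hy, hxy⟩ := isCompact_seg.exists_infEdist_eq_edist ⟨pt 1 0, right_mem_segment ℝ _ _⟩ x
  rw [mem_cthickening_iff, hxy] at hx
  have hd : dist x y ≤ ε := by
    rwa [edist_dist, ENNReal.ofReal_le_ofReal_iff hε.le] at hx
  obtain ⟨hy0, hy1⟩ := seg_coords hy
  have h0 := coord_le_dist x y 0
  have h1 := coord_le_dist x y 1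
  rw [hy1] at h1
  constructor
  · rw [Set.mem_Icc]
    rw [abs_le] at h0 hy0
    constructor <;> linarith [h0.1, h0.2, hy0.1, hy0.2, hd]
  · rw [Set.mem_Icc]
    rw [abs_le] at h1
    constructor <;> [linarith [h1.1, hd]; linarith [h1.2, hd]]

lemma box_subset_cthick {ε : ℝ} (hε : 0 < ε) :
    boxSet (1-ε) ε ⊆ cthickening ε (segment ℝ (pt (-1) 0) (pt 1 0)) := by
  rintro x ⟨hx0, hx1⟩
  rw [Set.mem_Icc] at hx0 hx1
  have hy : pt (x 0) 0 ∈ segment ℝ (pt (-1) 0) (pt 1 0) := by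
    apply mem_seg
    rw [abs_le]; constructor <;> linarith [hx0.1, hx0.2]
  apply mem_cthickening_of_dist_le x (pt (x 0) 0) ε _ hy
  rw [dist_eq2, pt0, pt1]
  rw [show (x 0 - x 0)^2 + (x 1 - 0)^2 = (x 1)^2 by ring, Real.sqrt_sq_eq_abs]
  rw [abs_le]; exact hx1

lemma cthick_dumbbell (ε : ℝ) (hε : 0 ≤ ε) :
    cthickening ε dumbbell =
      closedBall (pt (-(1 + Real.sqrt 2 / 2)) 0) (1 / Real.sqrt 2 + ε) ∪
      closedBall (pt (1 + Real.sqrt 2 / 2) 0) (1 / Real.sqrt 2 + ε) ∪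
      cthickening ε (segment ℝ (pt (-1) 0) (pt 1 0)) := by
  rw [dumbbell, cthickening_union, cthickening_union,
    cthickening_closedBall hε (by positivity), cthickening_closedBall hε (by positivity),
    add_comm ε]

lemma vol_cthick_upper {ε : ℝ} (hε : 0 < ε) :
    volume (cthickening ε dumbbell) ≤
      ENNReal.ofReal (Real.pi + 2 * Real.sqrt 2 * Real.pi * ε + 2 * Real.pi * ε^2
        + 4 * ε + 4 * ε^2) := by
  rw [cthick_dumbbell ε hε.le]
  calc volume _ ≤ volume (closedBall (pt (-(1 + Real.sqrt 2 / 2)) 0) (1 / Real.sqrt 2 + ε)) +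
        volume (closedBall (pt (1 + Real.sqrt 2 / 2) 0) (1 / Real.sqrt 2 + ε)) +
        volume (cthickening ε (segment ℝ (pt (-1) 0) (pt 1 0))) := by
        refine le_trans (measure_union_le _ _) ?_
        gcongr
        exact measure_union_le _ _
  _ ≤ ENNReal.ofReal (Real.pi * (1 / Real.sqrt 2 + ε)^2) +
        ENNReal.ofReal (Real.pi * (1 / Real.sqrt 2 + ε)^2) +
        ENNReal.ofReal (4 * (1+ε) * ε) := by
        gcongr
        · exact le_of_eq (vol_cb _ _ (by positivity))
        · exact le_of_eq (vol_cb _ _ (by positivity))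
        · rw [← vol_boxSet (1+ε) ε (by linarith) hε.le]
          exact measure_mono (cthick_seg_subset hε)
  _ = ENNReal.ofReal (Real.pi + 2 * Real.sqrt 2 * Real.pi * ε + 2 * Real.pi * ε^2
        + 4 * ε + 4 * ε^2) := by
        rw [← ENNReal.ofReal_add (by positivity) (by positivity),
          ← ENNReal.ofReal_add (by positivity) (by positivity)]
        congr 1
        rw [rad_eq]
        nlinarith [s2sq, Real.pi_pos]

lemma box_inter_balls_null {ε : ℝ} (hε : 0 < ε) (hε1 : ε < 1) :
    volume (boxSet (1-ε) ε ∩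
      (closedBall (pt (-(1 + Real.sqrt 2 / 2)) 0) (1 / Real.sqrt 2 + ε) ∪
       closedBall (pt (1 + Real.sqrt 2 / 2) 0) (1 / Real.sqrt 2 + ε))) = 0 := by
  have hsub : boxSet (1-ε) ε ∩
      (closedBall (pt (-(1 + Real.sqrt 2 / 2)) 0) (1 / Real.sqrt 2 + ε) ∪
       closedBall (pt (1 + Real.sqrt 2 / 2) 0) (1 / Real.sqrt 2 + ε)) ⊆
      sphere (pt (-(1 + Real.sqrt 2 / 2)) 0) (1 / Real.sqrt 2 + ε) ∪
      sphere (pt (1 + Real.sqrt 2 / 2) 0) (1 / Real.sqrt 2 + ε) := by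
    rintro x ⟨⟨hx0, hx1⟩, (hB | hB)⟩
    · left
      rw [mem_closedBall] at hB
      rw [mem_sphere]
      refine le_antisymm hB ?_
      have h := coord_le_dist x (pt (-(1 + Real.sqrt 2 / 2)) 0) 0
      rw [pt0] at h
      rw [Set.mem_Icc] at hx0
      have h2 : 1 / Real.sqrt 2 + ε ≤ x 0 - -(1 + Real.sqrt 2 / 2) := by
        rw [rad_eq]; linarith [hx0.1]
      linarith [h, h2.trans (le_abs_self _)]
    · right
      rw [mem_closedBall] at hB
      rw [mem_sphere]
      refine le_antisymm hB ?_
      have h := coord_le_dist x (pt (1 + Real.sqrt 2 / 2) 0) 0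
      rw [pt0] at h
      rw [Set.mem_Icc] at hx0
      have h2 : 1 / Real.sqrt 2 + ε ≤ -(x 0 - (1 + Real.sqrt 2 / 2)) := by
        rw [rad_eq]; linarith [hx0.2]
      linarith [h, h2.trans (neg_le_abs _)]
  refine measure_mono_null hsub (measure_union_null ?_ ?_) <;>
    exact Measure.addHaar_sphere volume _ _

lemma vol_cthick_lower {ε : ℝ} (hε : 0 < ε) (hε1 : ε < 1) :
    ENNReal.ofReal (Real.pi + 2 * Real.sqrt 2 * Real.pi * ε + 2 * Real.pi * ε^2
        + 4 * ε - 4 * ε^2) ≤ volume (cthickening ε dumbbell) := by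
  set B1 := closedBall (pt (-(1 + Real.sqrt 2 / 2)) 0) (1 / Real.sqrt 2 + ε) with hB1
  set B2 := closedBall (pt (1 + Real.sqrt 2 / 2) 0) (1 / Real.sqrt 2 + ε) with hB2
  set R := boxSet (1-ε) ε with hR
  have hsub : (B1 ∪ B2) ∪ R ⊆ cthickening ε dumbbell := by
    rw [cthick_dumbbell ε hε.le]
    exact Set.union_subset_union subset_rfl (box_subset_cthick hε)
  refine le_trans ?_ (measure_mono hsub)
  have hAmeas : MeasurableSet (B1 ∪ B2) := measurableSet_closedBall.union measurableSet_closedBall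
  have hdisj : Disjoint B1 B2 := by
    apply closedBall_disjoint_closedBall
    rw [dist_centers, rad_eq]
    linarith [hε1]
  have h1 : volume ((B1 ∪ B2) ∪ R) = volume (B1 ∪ B2) + volume (R \ (B1 ∪ B2)) := by
    rw [← Set.union_diff_self]
    exact measure_union disjoint_sdiff_self_right ((measurable_boxSet _ _).diff hAmeas)
  have h2 : volume (R \ (B1 ∪ B2)) = volume R :=
    measure_diff_null' (box_inter_balls_null hε hε1)
  have h3 : volume (B1 ∪ B2) = volume B1 + volume B2 :=
    measure_union hdisj measurableSet_closedBall
  rw [h1, h2, h3, hB1, hB2, vol_cb _ _ (by positivity), vol_cb _ _ (by positivity),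
    hR, vol_boxSet _ _ (by linarith) hε.le,
    ← ENNReal.ofReal_add (by positivity) (by positivity),
    ← ENNReal.ofReal_add (by positivity) (by nlinarith [hε, hε1] : (0:ℝ) ≤ 4 * (1-ε) * ε)]
  apply ENNReal.ofReal_le_ofReal
  rw [rad_eq]
  nlinarith [s2sq, Real.pi_pos]

lemma mink_tendsto :
    Filter.Tendsto (fun ε : ℝ => ((volume (cthickening ε dumbbell)).toReal - Real.pi) / ε)
      (nhdsWithin 0 (Set.Ioi 0)) (nhds (2 * Real.sqrt 2 * Real.pi + 4)) := by
  have hmem : Set.Ioo (0:ℝ) 1 ∈ nhdsWithin 0 (Set.Ioi 0) :=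
    Ioo_mem_nhdsGT_of_mem ⟨le_refl 0, zero_lt_one⟩
  have hg1 : Filter.Tendsto (fun ε : ℝ => 2 * Real.sqrt 2 * Real.pi + 4 + (2*Real.pi - 4)*ε)
      (nhdsWithin 0 (Set.Ioi 0)) (nhds (2 * Real.sqrt 2 * Real.pi + 4)) := by
    have := ((continuous_const.add ((continuous_const.mul continuous_id)) :
      Continuous fun ε : ℝ => 2 * Real.sqrt 2 * Real.pi + 4 + (2*Real.pi - 4)*ε)).tendsto 0
    simp only [Pi.add_apply, mul_zero, add_zero, id] at this
    exact this.mono_left nhdsWithin_le_nhds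
  have hg2 : Filter.Tendsto (fun ε : ℝ => 2 * Real.sqrt 2 * Real.pi + 4 + (2*Real.pi + 4)*ε)
      (nhdsWithin 0 (Set.Ioi 0)) (nhds (2 * Real.sqrt 2 * Real.pi + 4)) := by
    have := ((continuous_const.add ((continuous_const.mul continuous_id)) :
      Continuous fun ε : ℝ => 2 * Real.sqrt 2 * Real.pi + 4 + (2*Real.pi + 4)*ε)).tendsto 0
    simp only [Pi.add_apply, mul_zero, add_zero, id] at this
    exact this.mono_left nhdsWithin_le_nhds
  apply tendsto_of_tendsto_of_tendsto_of_le_of_le' hg1 hg2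
  · filter_upwards [hmem] with ε hε
    obtain ⟨h0, h1⟩ := hε
    have hlo := vol_cthick_lower h0 h1
    have hup := vol_cthick_upper h0
    have hfin : volume (cthickening ε dumbbell) ≠ ⊤ :=
      ne_top_of_le_ne_top ENNReal.ofReal_ne_top hup
    have hge : Real.pi + 2 * Real.sqrt 2 * Real.pi * ε + 2 * Real.pi * ε^2 + 4 * ε - 4 * ε^2
        ≤ (volume (cthickening ε dumbbell)).toReal :=
      (ENNReal.ofReal_le_iff_le_toReal hfin).mp hlo
    rw [le_div_iff₀ h0]
    nlinarith [hge, Real.pi_pos, s2pos]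
  · filter_upwards [hmem] with ε hε
    obtain ⟨h0, h1⟩ := hε
    have hup := vol_cthick_upper h0
    have hle : (volume (cthickening ε dumbbell)).toReal
        ≤ Real.pi + 2 * Real.sqrt 2 * Real.pi * ε + 2 * Real.pi * ε^2 + 4 * ε + 4 * ε^2 :=
      ENNReal.toReal_le_of_le_ofReal (by positivity) hup
    rw [div_le_iff₀ h0]
    nlinarith [hle, Real.pi_pos, s2pos]

/-- The ratio `δ(D)/λ₀(D)²` for the dumbbell, with the Minkowski perimeter,
equals `(√2 - 1)/4 + 1/(2π)`. -/
theorem stmt_9 (P : ℝ)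
    (hP : Filter.Tendsto
      (fun ε : ℝ => ((volume (cthickening ε dumbbell)).toReal - (volume dumbbell).toReal) / ε)
      (nhdsWithin 0 (Set.Ioi 0)) (nhds P)) :
    (P / (2 * Real.pi) - 1) /
      ((volume ((dumbbell \ closedBall dumbbellBary 1) ∪
          (closedBall dumbbellBary 1 \ dumbbell))).toReal / (volume dumbbell).toReal) ^ 2
      = (Real.sqrt 2 - 1) / 4 + 1 / (2 * Real.pi) := by
  have hπ : (volume dumbbell).toReal = Real.pi := by
    rw [vol_dumbbell]; exact ENNReal.toReal_ofReal Real.pi_pos.le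
  rw [hπ] at hP
  have hPval : P = 2 * Real.sqrt 2 * Real.pi + 4 := tendsto_nhds_unique hP mink_tendsto
  rw [hPval, hπ, bary_eq, vol_symmdiff, ENNReal.toReal_ofReal (by positivity)]
  have hpi := Real.pi_pos
  rw [show (2 * Real.pi / Real.pi) = 2 by field_simp]
  field_simp
  ring
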